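/- Let Λ ∈ SO(3) with 1 + Tr(Λ) ≠ 0, let r ∈ ℝ³, and let g be the 4×4 matrix with upper-left block Λ, upper-right column r, and last row (0,0,0,1). Let ω ∈ ℝ³ be the unique vector with ω̂ = 2(Λ − I₃)(Λ + I₃)⁻¹ and set γ := 2(Λ + I₃)⁻¹ r. Then: (a) τ(ω,γ) := (I₄ − X(ω,γ)/2)⁻¹ (I₄ + X(ω,γ)/2) = g, and (b) X(ω,γ) = −2 (I₄ + g)⁻¹ (I₄ − g) (with I₄ + g invertible). -/

import Mathlib

set_option maxHeartbeats 1000000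

open Matrix

noncomputable section

/-- The hat map `ω ↦ ω̂` sending a vector in `ℝ³` to the skew-symmetric matrix
satisfying `ω̂ v = ω × v`. -/
def hat (ω : EuclideanSpace ℝ (Fin 3)) : Matrix (Fin 3) (Fin 3) ℝ :=
  !![0, -ω 2, ω 1; ω 2, 0, -ω 0; -ω 1, ω 0, 0]

/-- The embedding of `se(3)` into `4×4` real matrices: `X(ω,γ)` has upper-left `3×3`
block `ω̂`, upper-right column `γ`, and zero last row. -/
def Xse (ω γ : EuclideanSpace ℝ (Fin 3)) : Matrix (Fin 4) (Fin 4) ℝ :=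
  !![0, -ω 2, ω 1, γ 0;
     ω 2, 0, -ω 0, γ 1;
     -ω 1, ω 0, 0, γ 2;
     0, 0, 0, 0]

/-- The `4×4` matrix with rotation block `Λ`, translation column `r`, and last row
`(0,0,0,1)`, i.e. the embedding of `SE(3)` into `4×4` real matrices. -/
def g4 (Λ : Matrix (Fin 3) (Fin 3) ℝ) (r : EuclideanSpace ℝ (Fin 3)) :
    Matrix (Fin 4) (Fin 4) ℝ :=
  !![Λ 0 0, Λ 0 1, Λ 0 2, r 0;
     Λ 1 0, Λ 1 1, Λ 1 2, r 1;
     Λ 2 0, Λ 2 1, Λ 2 2, r 2;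
     0, 0, 0, 1]

/-- Inverse of the `SE(3)` Cayley-type map: for `Λ ∈ SO(3)` with `1 + Tr Λ ≠ 0`, `r ∈ ℝ³`,
`ω` the unique vector with `ω̂ = 2(Λ − I₃)(Λ + I₃)⁻¹`, and `γ := 2(Λ + I₃)⁻¹ r`, one has
(a) `τ(ω,γ) = g`, and (b) `X(ω,γ) = −2(I₄ + g)⁻¹(I₄ − g)` with `I₄ + g` invertible. -/
theorem tau_inverse_formula (Λ : Matrix (Fin 3) (Fin 3) ℝ)
    (horth : Λᵀ * Λ = 1) (hdet : Λ.det = 1) (htr : 1 + Λ.trace ≠ 0)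
    (r ω γ : EuclideanSpace ℝ (Fin 3))
    (hω : hat ω = (2 : ℝ) • ((Λ - 1) * (Λ + 1)⁻¹))
    (hγ : γ = WithLp.toLp 2 ((2 : ℝ) • ((Λ + 1)⁻¹ *ᵥ r))) :
    ((1 : Matrix (Fin 4) (Fin 4) ℝ) - (1/2 : ℝ) • Xse ω γ)⁻¹ *
        ((1 : Matrix (Fin 4) (Fin 4) ℝ) + (1/2 : ℝ) • Xse ω γ)
      = g4 Λ r ∧
    IsUnit ((1 : Matrix (Fin 4) (Fin 4) ℝ) + g4 Λ r) ∧
    Xse ω γ = (-2 : ℝ) • (((1 : Matrix (Fin 4) (Fin 4) ℝ) + g4 Λ r)⁻¹ *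
        ((1 : Matrix (Fin 4) (Fin 4) ℝ) - g4 Λ r)) := by
  -- `det (Λ + 1) = 2 (1 + tr Λ)` via the adjugate
  have hΛΛt : Λ * Λᵀ = 1 := mul_eq_one_comm.mp horth
  have h1 : Λ * Λ.adjugate = 1 := by rw [Matrix.mul_adjugate, hdet, one_smul]
  have hadj : Λ.adjugate = Λᵀ := by
    calc Λ.adjugate = (Λᵀ * Λ) * Λ.adjugate := by rw [horth, one_mul]
    _ = Λᵀ * (Λ * Λ.adjugate) := by rw [mul_assoc]
    _ = Λᵀ := by rw [h1, mul_one]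
  have hdetB : (Λ + 1).det = 2 * (1 + Λ.trace) := by
    rw [Matrix.adjugate_fin_three] at hadj
    have h00 := congrFun (congrFun hadj 0) 0
    have h11 := congrFun (congrFun hadj 1) 1
    have h22 := congrFun (congrFun hadj 2) 2
    simp [Matrix.transpose_apply] at h00 h11 h22
    have hd := hdet
    rw [Matrix.det_fin_three] at hd
    rw [Matrix.det_fin_three, Matrix.trace_fin_three]
    simp [Matrix.add_apply, Matrix.one_apply]
    linear_combination hd + h00 + h11 + h22
  have hBdet : IsUnit (Λ + 1).det := by
    rw [hdetB]; exact (isUnit_iff_ne_zero).2 (by simpa using mul_ne_zero two_ne_zero htr)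
  have hBinv : (Λ + 1)⁻¹ * (Λ + 1) = 1 := Matrix.nonsing_inv_mul _ hBdet
  have hinvB : (Λ + 1) * (Λ + 1)⁻¹ = 1 := Matrix.mul_nonsing_inv _ hBdet
  -- key matrix equations without inverses
  have hΩB : hat ω * (Λ + 1) = (2 : ℝ) • (Λ - 1) := by
    rw [hω, smul_mul_assoc, mul_assoc, hBinv, mul_one]
  have hBΩ : (Λ + 1) * hat ω = (2 : ℝ) • (Λ - 1) := by
    rw [hω, mul_smul_comm, ← mul_assoc]
    have hcomm : (Λ + 1) * (Λ - 1) = (Λ - 1) * (Λ + 1) := by noncomm_ring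
    rw [hcomm, mul_assoc, hinvB, mul_one]
  have hBγ : (Λ + 1) *ᵥ γ = (2 : ℝ) • r := by
    rw [hγ, Matrix.mulVec_smul, Matrix.mulVec_mulVec, hinvB, Matrix.one_mulVec, WithLp.ofLp_smul]
  have hΛγ : Λ *ᵥ γ = (2 : ℝ) • r - γ := by
    rw [Matrix.add_mulVec, Matrix.one_mulVec] at hBγ
    exact eq_sub_of_add_eq hBγ
  have hΩΛ : hat ω * Λ = (2 : ℝ) • Λ - (2 : ℝ) • (1 : Matrix (Fin 3) (Fin 3) ℝ) - hat ω := by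
    rw [mul_add, mul_one, smul_sub] at hΩB
    exact eq_sub_of_add_eq hΩB
  have hΛΩ : Λ * hat ω = (2 : ℝ) • Λ - (2 : ℝ) • (1 : Matrix (Fin 3) (Fin 3) ℝ) - hat ω := by
    rw [add_mul, one_mul, smul_sub] at hBΩ
    exact eq_sub_of_add_eq hBΩ
  have hΩr : hat ω *ᵥ r = (2 : ℝ) • r - (2 : ℝ) • γ := by
    have h2 : hat ω *ᵥ ((Λ + 1) *ᵥ γ) = (2 : ℝ) • (hat ω *ᵥ r) := by
      rw [hBγ, WithLp.ofLp_smul, Matrix.mulVec_smul]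
    rw [Matrix.mulVec_mulVec, hΩB, Matrix.smul_mulVec, Matrix.sub_mulVec,
      Matrix.one_mulVec, hΛγ] at h2
    have h3 : (2 : ℝ) • (hat ω *ᵥ r) = (2 : ℝ) • ((2 : ℝ) • r - (2 : ℝ) • γ) := by
      rw [← h2]; module
    exact smul_right_injective _ (two_ne_zero) h3
  -- scalar entry equations
  have a00 := congrFun (congrFun hΩΛ 0) 0
  have a01 := congrFun (congrFun hΩΛ 0) 1
  have a02 := congrFun (congrFun hΩΛ 0) 2
  have a10 := congrFun (congrFun hΩΛ 1) 0
  have a11 := congrFun (congrFun hΩΛ 1) 1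
  have a12 := congrFun (congrFun hΩΛ 1) 2
  have a20 := congrFun (congrFun hΩΛ 2) 0
  have a21 := congrFun (congrFun hΩΛ 2) 1
  have a22 := congrFun (congrFun hΩΛ 2) 2
  have b00 := congrFun (congrFun hΛΩ 0) 0
  have b01 := congrFun (congrFun hΛΩ 0) 1
  have b02 := congrFun (congrFun hΛΩ 0) 2
  have b10 := congrFun (congrFun hΛΩ 1) 0
  have b11 := congrFun (congrFun hΛΩ 1) 1
  have b12 := congrFun (congrFun hΛΩ 1) 2
  have b20 := congrFun (congrFun hΛΩ 2) 0
  have b21 := congrFun (congrFun hΛΩ 2) 1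
  have b22 := congrFun (congrFun hΛΩ 2) 2
  have c0 := congrFun hΛγ 0
  have c1 := congrFun hΛγ 1
  have c2 := congrFun hΛγ 2
  have d0 := congrFun hΩr 0
  have d1 := congrFun hΩr 1
  have d2 := congrFun hΩr 2
  simp [hat, Matrix.mul_apply, Matrix.mulVec, dotProduct, Fin.sum_univ_three,
    Matrix.smul_apply, Matrix.sub_apply, Matrix.one_apply, Pi.smul_apply, Pi.sub_apply]
    at a00 a01 a02 a10 a11 a12 a20 a21 a22 b00 b01 b02 b10 b11 b12 b20 b21 b22 c0 c1 c2 d0 d1 d2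
  -- the two block-product identities
  have L1 : Xse ω γ * g4 Λ r = (2 : ℝ) • g4 Λ r - (2 : ℝ) • 1 - Xse ω γ := by
    ext i j
    fin_cases i <;> fin_cases j <;>
      · simp only [Xse, g4, Matrix.mul_apply, Fin.sum_univ_four, Matrix.smul_apply,
          Matrix.sub_apply, Matrix.add_apply, Matrix.one_apply, Matrix.cons_val',
          Matrix.cons_val_zero, Matrix.cons_val_one, Matrix.head_cons, Matrix.head_fin_const,
          Matrix.cons_val_fin_one, Matrix.empty_val', Matrix.cons_val_two, Matrix.cons_val_three,
          Matrix.vecHead, Matrix.vecTail, Matrix.of_apply, Function.comp_apply, Fin.isValue,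
          Fin.mk_one, Fin.mk_zero, Fin.reduceEq, if_true, if_false, Fin.zero_eta, Matrix.cons_val, Matrix.cons_val_succ]
        norm_num [Fin.ext_iff, Matrix.vecHead, Matrix.vecTail]
        try linarith [a00, a01, a02, a10, a11, a12, a20, a21, a22,
          b00, b01, b02, b10, b11, b12, b20, b21, b22, c0, c1, c2, d0, d1, d2]
  have L2 : ((1 : Matrix (Fin 4) (Fin 4) ℝ) + g4 Λ r) * Xse ω γ
      = (2 : ℝ) • g4 Λ r - (2 : ℝ) • 1 := by
    ext i j
    fin_cases i <;> fin_cases j <;>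
      · simp only [Xse, g4, Matrix.mul_apply, Fin.sum_univ_four, Matrix.smul_apply,
          Matrix.sub_apply, Matrix.add_apply, Matrix.one_apply, Matrix.cons_val',
          Matrix.cons_val_zero, Matrix.cons_val_one, Matrix.head_cons, Matrix.head_fin_const,
          Matrix.cons_val_fin_one, Matrix.empty_val', Matrix.cons_val_two, Matrix.cons_val_three,
          Matrix.vecHead, Matrix.vecTail, Matrix.of_apply, Function.comp_apply, Fin.isValue,
          Fin.mk_one, Fin.mk_zero, Fin.reduceEq, if_true, if_false, Fin.zero_eta, Matrix.cons_val, Matrix.cons_val_succ]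
        norm_num [Fin.ext_iff, Matrix.vecHead, Matrix.vecTail]
        try linarith [a00, a01, a02, a10, a11, a12, a20, a21, a22,
          b00, b01, b02, b10, b11, b12, b20, b21, b22, c0, c1, c2, d0, d1, d2]
  -- determinants of the two relevant 4×4 matrices
  have hdetE : ((1 : Matrix (Fin 4) (Fin 4) ℝ) - (1/2 : ℝ) • Xse ω γ).det
      = 1 + (ω 0 ^ 2 + ω 1 ^ 2 + ω 2 ^ 2) / 4 := by
    simp [Matrix.det_succ_row_zero, Fin.sum_univ_succ, Xse, Matrix.sub_apply,
      Matrix.smul_apply, Matrix.one_apply, Fin.succAbove,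
      Matrix.submatrix_apply, Matrix.cons_val_succ, Fin.val_succ, Fin.castSucc, Fin.castAdd,
      Fin.castLE, Matrix.cons_val', Matrix.vecHead, Matrix.vecTail]
    ring
  have hdetG : ((1 : Matrix (Fin 4) (Fin 4) ℝ) + g4 Λ r).det = 2 * (Λ + 1).det := by
    rw [Matrix.det_fin_three]
    simp [Matrix.det_succ_row_zero, Fin.sum_univ_succ, g4, Matrix.add_apply,
      Matrix.one_apply, Fin.succAbove, Matrix.submatrix_apply,
      Matrix.cons_val_succ, Fin.val_succ, Fin.castSucc, Fin.castAdd, Fin.castLE,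
      Matrix.cons_val', Matrix.vecHead, Matrix.vecTail]
    ring
  have hEdet : IsUnit ((1 : Matrix (Fin 4) (Fin 4) ℝ) - (1/2 : ℝ) • Xse ω γ).det := by
    rw [hdetE]
    exact isUnit_iff_ne_zero.2 (by positivity)
  have hGdet : IsUnit ((1 : Matrix (Fin 4) (Fin 4) ℝ) + g4 Λ r).det := by
    rw [hdetG, hdetB]
    exact isUnit_iff_ne_zero.2
      (mul_ne_zero (two_ne_zero (α := ℝ)) (mul_ne_zero (two_ne_zero (α := ℝ)) htr))
  refine ⟨?_, ?_, ?_⟩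
  · -- part (a)
    have hE : ((1 : Matrix (Fin 4) (Fin 4) ℝ) - (1/2 : ℝ) • Xse ω γ) * g4 Λ r
        = 1 + (1/2 : ℝ) • Xse ω γ := by
      rw [sub_mul, one_mul, smul_mul_assoc, L1]
      module
    rw [← hE, ← mul_assoc, Matrix.nonsing_inv_mul _ hEdet, one_mul]
  · exact (Matrix.isUnit_iff_isUnit_det _).2 hGdet
  · -- part (b)
    have hgX : ((1 : Matrix (Fin 4) (Fin 4) ℝ) + g4 Λ r) * Xse ω γ
        = ((1 : Matrix (Fin 4) (Fin 4) ℝ) + g4 Λ r) *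
          ((-2 : ℝ) • (((1 : Matrix (Fin 4) (Fin 4) ℝ) + g4 Λ r)⁻¹ *
            ((1 : Matrix (Fin 4) (Fin 4) ℝ) - g4 Λ r))) := by
      rw [mul_smul_comm, ← mul_assoc, Matrix.mul_nonsing_inv _ hGdet, one_mul, L2]
      module
    have hcancel := congrArg (fun M => ((1 : Matrix (Fin 4) (Fin 4) ℝ) + g4 Λ r)⁻¹ * M) hgX
    simpa [← mul_assoc, Matrix.nonsing_inv_mul _ hGdet] using hcancel
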